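/- Let C be a finite set of size k and let (ω_n)_{n≥0} be a sequence of distributions on C such that for every n, either ω_{n+1} = ω_n or ω_{n+1} is more equitable than ω_n. Suppose there is a real number A ≥ 1 such that for every n and every color α with ω_{n+1}(α) > ω_n(α), one has ‖ω_{n+1} − ω_n‖₁ ≤ A·(ω_{n+1}(α) − ω_n(α)). Then ∑_{n=0}^∞ ‖ω_{n+1} − ω_n‖₁ ≤ ((1+A)^{k+1}/A)·disc(ω₀), where disc(ω) = max_{α∈C} |ω(α) − 1/k|. -/

import Mathlib

open Finset


noncomputable def botSum {C : Type*} [Fintype C] (j : ℕ) (ω : C → ℝ) : ℝ :=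
  if h : (Finset.powersetCard j (univ : Finset C)).Nonempty then
    (Finset.powersetCard j (univ : Finset C)).inf' h (fun V => ∑ β ∈ V, ω β) else 0

section Aux
variable {C : Type*} [Fintype C] {j : ℕ} {ω ωs : C → ℝ}

lemma pcard_ne (hj : j ≤ Fintype.card C) :
    (Finset.powersetCard j (univ : Finset C)).Nonempty := by
  obtain ⟨V, hV1, hV2⟩ := Finset.exists_subset_card_eq (s := (univ : Finset C)) (by simpa using hj)
  exact ⟨V, Finset.mem_powersetCard.2 ⟨hV1, hV2⟩⟩

lemma botSum_le (hj : j ≤ Fintype.card C) {V : Finset C} (hV : V.card = j) :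
    botSum j ω ≤ ∑ β ∈ V, ω β := by
  rw [botSum, dif_pos (pcard_ne hj)]
  exact Finset.inf'_le _ (Finset.mem_powersetCard.2 ⟨subset_univ V, hV⟩)

lemma exists_botSum (ω : C → ℝ) (hj : j ≤ Fintype.card C) :
    ∃ V : Finset C, V.card = j ∧ botSum j ω = ∑ β ∈ V, ω β := by
  rw [botSum, dif_pos (pcard_ne hj)]
  obtain ⟨V, hV, hEq⟩ := Finset.exists_mem_eq_inf' (pcard_ne hj) (fun V => ∑ β ∈ V, ω β)
  exact ⟨V, (Finset.mem_powersetCard.1 hV).2, hEq⟩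
end Aux

lemma exists_low_subset {C : Type*} [Fintype C] [DecidableEq C] {j : ℕ} {T : Finset C} {t : ℝ}
    {ωs : C → ℝ} (hTle : ∀ γ ∈ T, ωs γ ≤ t) (hTge : ∀ β ∉ T, t ≤ ωs β)
    (hj : j ≤ T.card) {W : Finset C} (hW : W.card = j) :
    ∃ V, V ⊆ T ∧ V.card = j ∧ ∑ β ∈ V, ωs β ≤ ∑ β ∈ W, ωs β := by
  have hc : (W ∩ T).card ≤ j := hW ▸ card_le_card inter_subset_left
  obtain ⟨V, hV1, hV2, hV3⟩ := Finset.exists_subsuperset_card_eq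
    (inter_subset_right : W ∩ T ⊆ T) hc (by omega)
  refine ⟨V, hV2, hV3, ?_⟩
  have e1 : ∑ β ∈ V \ (W ∩ T), ωs β + ∑ β ∈ W ∩ T, ωs β = ∑ β ∈ V, ωs β :=
    Finset.sum_sdiff hV1
  have e2 : ∑ β ∈ W \ (W ∩ T), ωs β + ∑ β ∈ W ∩ T, ωs β = ∑ β ∈ W, ωs β :=
    Finset.sum_sdiff inter_subset_left
  have hWd : W \ (W ∩ T) = W \ T := by ext x; simp [mem_sdiff, mem_inter]
  have hcard1 : (V \ (W ∩ T)).card = j - (W ∩ T).card := by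
    rw [card_sdiff_of_subset hV1, hV3]
  have hcard2 : (W \ T).card = j - (W ∩ T).card := by
    rw [← hWd, card_sdiff_of_subset inter_subset_left, hW]
  have b1 : ∑ β ∈ V \ (W ∩ T), ωs β ≤ (V \ (W ∩ T)).card • t :=
    Finset.sum_le_card_nsmul _ _ _ (fun x hx => hTle x (hV2 ((mem_sdiff.1 hx).1)))
  have b2 : (W \ T).card • t ≤ ∑ β ∈ W \ T, ωs β :=
    Finset.card_nsmul_le_sum _ _ _ (fun x hx => hTge x ((mem_sdiff.1 hx).2))
  rw [hcard1] at b1; rw [hcard2] at b2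
  rw [hWd] at e2
  linarith
lemma geom_aux (A : ℝ) (m : ℕ) : ∑ i ∈ range m, A*(1+A)^i = (1+A)^m - 1 := by
  induction m with
  | zero => simp
  | succ m ih => rw [Finset.sum_range_succ, ih]; ring

lemma step_bound {C : Type*} [Fintype C] {k : ℕ} (hk : Fintype.card C = k)
    (ω ωs : C → ℝ) (hsum : ∑ β, ω β = 1) (hsum' : ∑ β, ωs β = 1)
    {α : C} (hα : ω α < ωs α)
    (heq : ∀ β, ωs β < ω β → ωs α ≤ ωs β)
    {A : ℝ} (hA : 1 ≤ A)
    (hL : ∑ β, |ωs β - ω β| ≤ A * (ωs α - ω α)) :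
    ∑ β, |ωs β - ω β| ≤
      (∑ i ∈ range (k-1), A*(1+A)^i * botSum (k-1-i) ωs)
      - (∑ i ∈ range (k-1), A*(1+A)^i * botSum (k-1-i) ω) := by
  classical
  set L := ∑ β, |ωs β - ω β| with hLdef
  set D := ∑ β, max (ω β - ωs β) 0 with hDdef
  set T := (univ.filter (fun β => ωs β < ωs α)) ∪ {α} with hTdef
  set r := T.card with hrdef
  have hαT : α ∈ T := by simp [hTdef]
  have hTle : ∀ γ ∈ T, ωs γ ≤ ωs α := by
    intro γ hγ
    rcases mem_union.1 hγ with h | h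
    · exact le_of_lt (mem_filter.1 h).2
    · rw [mem_singleton.1 h]
  have hTge : ∀ β, β ∉ T → ωs α ≤ ωs β := by
    intro β hβ
    have : ¬ (ωs β < ωs α) := fun h => hβ (mem_union_left _ (mem_filter.2 ⟨mem_univ β, h⟩))
    linarith
  have hmono : ∀ γ ∈ T, ω γ ≤ ωs γ := by
    intro γ hγ
    by_contra h
    push_neg at h
    have h1 := heq γ h
    rcases mem_union.1 hγ with h2 | h2
    · exact absurd (mem_filter.1 h2).2 (not_lt.2 h1)
    · rw [mem_singleton.1 h2] at h; linarith
  have hr1 : 1 ≤ r := card_pos.2 ⟨α, hαT⟩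
  -- some color decreases
  have hdec : ∃ β, ωs β < ω β := by
    by_contra h
    push_neg at h
    have h0 : ∑ _β : C, (0:ℝ) < ∑ β : C, (ωs β - ω β) := by
      apply Finset.sum_lt_sum (f := fun _ => (0:ℝ)) (g := fun β => ωs β - ω β)
        (fun i _ => by linarith [h i]) ⟨α, mem_univ α, by linarith⟩
    rw [Finset.sum_sub_distrib, hsum, hsum'] at h0
    simp at h0
  obtain ⟨β₀, hβ₀⟩ := hdec
  have hβ₀T : β₀ ∉ T := by
    intro hmem
    have := hmono β₀ hmem
    linarith
  have hrk : r ≤ k - 1 := by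
    have hsub : T ⊆ univ.erase β₀ := by
      intro x hx
      exact mem_erase.2 ⟨fun h => hβ₀T (h ▸ hx), mem_univ x⟩
    have := card_le_card hsub
    rwa [card_erase_of_mem (mem_univ β₀), card_univ, hk] at this
  have hk2 : 2 ≤ k := by omega
  have hA0 : (0:ℝ) < A := by linarith
  have hL0 : 0 ≤ L := Finset.sum_nonneg (fun β _ => abs_nonneg _)
  have hg0 : 0 < ωs α - ω α := by linarith
  -- D = L / 2
  have hDL : 2 * D = L := by
    have hpt : ∀ β, |ωs β - ω β| = (ωs β - ω β) + 2 * max (ω β - ωs β) 0 := by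
      intro β
      rcases le_total (ω β) (ωs β) with h | h
      · rw [abs_of_nonneg (by linarith), max_eq_right (by linarith)]; ring
      · rw [abs_of_nonpos (by linarith), max_eq_left (by linarith)]; ring
    have : L = ∑ β, ((ωs β - ω β) + 2 * max (ω β - ωs β) 0) :=
      Finset.sum_congr rfl (fun β _ => hpt β)
    rw [Finset.sum_add_distrib, Finset.sum_sub_distrib, hsum, hsum', ← Finset.mul_sum] at this
    rw [this]; ring
  -- comparison lemmas
  have hrkk : r ≤ Fintype.card C := by omega
  have hupper : ∀ j, j ≤ Fintype.card C → botSum j ω - D ≤ botSum j ωs := by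
    intro j hj
    obtain ⟨W, hWc, hWe⟩ := exists_botSum ωs hj
    have h1 : botSum j ω ≤ ∑ b ∈ W, ω b := botSum_le hj hWc
    have h2 : ∑ b ∈ W, ω b - ∑ b ∈ W, ωs b ≤ D := by
      rw [← Finset.sum_sub_distrib]
      calc ∑ b ∈ W, (ω b - ωs b) ≤ ∑ b ∈ W, max (ω b - ωs b) 0 :=
            Finset.sum_le_sum (fun b _ => le_max_left _ _)
        _ ≤ D := Finset.sum_le_sum_of_subset_of_nonneg (subset_univ W)
            (fun b _ _ => le_max_right _ _)
    rw [hWe]; linarith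
  have hlow : ∀ j, j ≤ r → botSum j ω ≤ botSum j ωs := by
    intro j hj
    have hjk : j ≤ Fintype.card C := by omega
    obtain ⟨W, hWc, hWe⟩ := exists_botSum ωs hjk
    obtain ⟨V, hVT, hVc, hVle⟩ := exists_low_subset hTle hTge (hrdef ▸ hj) hWc
    have h1 : botSum j ω ≤ ∑ b ∈ V, ω b := botSum_le hjk hVc
    have h2 : ∑ b ∈ V, ω b ≤ ∑ b ∈ V, ωs b :=
      Finset.sum_le_sum (fun b hb => hmono b (hVT hb))
    rw [hWe]; linarith
  have hgain : botSum r ω + (ωs α - ω α) ≤ botSum r ωs := by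
    obtain ⟨W, hWc, hWe⟩ := exists_botSum ωs hrkk
    obtain ⟨V, hVT, hVc, hVle⟩ := exists_low_subset hTle hTge (le_refl r) hWc
    have hVT' : V = T := Finset.eq_of_subset_of_card_le hVT (by rw [hVc])
    have h1 : botSum r ω ≤ ∑ b ∈ T, ω b := botSum_le hrkk (hrdef.symm)
    have h2 : ωs α - ω α ≤ ∑ b ∈ T, (ωs b - ω b) :=
      Finset.single_le_sum (f := fun b => ωs b - ω b)
        (fun b hb => by linarith [hmono b hb]) hαT
    rw [Finset.sum_sub_distrib] at h2
    rw [hWe]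
    rw [hVT'] at hVle
    linarith
  -- assemble
  set m := k - 1 - r with hmdef
  have hmlt : m < k - 1 := by omega
  have hperi : ∀ i ∈ range (k-1),
      (if i = m then A*(1+A)^m * (ωs α - ω α) else 0) -
        (if i < m then A*(1+A)^i * (L/2) else 0)
      ≤ A*(1+A)^i * botSum (k-1-i) ωs - A*(1+A)^i * botSum (k-1-i) ω := by
    intro i hi
    have hi' := mem_range.1 hi
    have hco : (0:ℝ) ≤ A*(1+A)^i := by positivity
    rw [← mul_sub]
    rcases lt_trichotomy i m with h | h | h
    · rw [if_neg (by omega), if_pos h]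
      have hj : k - 1 - i ≤ Fintype.card C := by omega
      have := hupper (k-1-i) hj
      have h2 : -(L/2) ≤ botSum (k-1-i) ωs - botSum (k-1-i) ω := by linarith
      have := mul_le_mul_of_nonneg_left h2 hco
      linarith
    · subst h
      rw [if_pos rfl, if_neg (by omega)]
      have hjr : k - 1 - m = r := by omega
      rw [hjr]
      have h2 : (ωs α - ω α) ≤ botSum r ωs - botSum r ω := by linarith
      have := mul_le_mul_of_nonneg_left h2 hco
      linarith
    · rw [if_neg (by omega), if_neg (by omega)]
      have hjr : k - 1 - i ≤ r := by omega
      have := hlow (k-1-i) hjr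
      have := mul_le_mul_of_nonneg_left (by linarith : (0:ℝ) ≤ botSum (k-1-i) ωs - botSum (k-1-i) ω) hco
      linarith
  have hsum1 : ∑ i ∈ range (k-1), (if i = m then A*(1+A)^m * (ωs α - ω α) else 0)
      = A*(1+A)^m * (ωs α - ω α) := by
    rw [Finset.sum_ite_eq' (range (k-1)) m (fun _ => A*(1+A)^m * (ωs α - ω α))]
    rw [if_pos (mem_range.2 hmlt)]
  have hsum2 : ∑ i ∈ range (k-1), (if i < m then A*(1+A)^i * (L/2) else 0)
      = (L/2) * ((1+A)^m - 1) := by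
    rw [← Finset.sum_subset (Finset.range_subset_range.2 (le_of_lt hmlt))
      (fun x _ hx => if_neg (fun hlt => hx (mem_range.2 hlt)))]
    rw [Finset.sum_congr rfl (fun x hx => if_pos (mem_range.1 hx))]
    rw [← geom_aux A m, Finset.mul_sum]
    exact Finset.sum_congr rfl (fun x _ => by ring)
  have htot : A*(1+A)^m * (ωs α - ω α) - (L/2) * ((1+A)^m - 1)
      ≤ (∑ i ∈ range (k-1), A*(1+A)^i * botSum (k-1-i) ωs)
        - (∑ i ∈ range (k-1), A*(1+A)^i * botSum (k-1-i) ω) := by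
    rw [← Finset.sum_sub_distrib, ← hsum1, ← hsum2, ← Finset.sum_sub_distrib]
    exact Finset.sum_le_sum hperi
  have hpm : (1:ℝ) ≤ (1+A)^m := one_le_pow₀ (by linarith)
  have hAg : L ≤ A * (ωs α - ω α) := hL
  have : L ≤ A*(1+A)^m * (ωs α - ω α) - (L/2) * ((1+A)^m - 1) := by
    nlinarith [mul_le_mul_of_nonneg_left hAg (by positivity : (0:ℝ) ≤ (1+A)^m)]
  linarith
lemma botSum_ge {C : Type*} [Fintype C] {j : ℕ} (ω : C → ℝ) {c : ℝ}
    (hc : ∀ β, c ≤ ω β) (hj : j ≤ Fintype.card C) :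
    (j:ℝ) * c ≤ botSum j ω := by
  obtain ⟨V, hVc, hVe⟩ := exists_botSum ω hj
  rw [hVe]
  have := Finset.card_nsmul_le_sum V ω c (fun b _ => hc b)
  rwa [hVc, nsmul_eq_mul] at this

lemma botSum_le_div {C : Type*} [Fintype C] {k : ℕ} (hk : Fintype.card C = k)
    (hk1 : 1 ≤ k) (ω : C → ℝ) (hsum : ∑ β, ω β = 1) :
    ∀ j, j ≤ k → botSum j ω ≤ (j:ℝ) / k := by
  classical
  have hk0 : (0:ℝ) < k := by exact_mod_cast hk1
  intro j
  induction j with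
  | zero =>
    intro _
    have h0 : botSum 0 ω ≤ ∑ β ∈ (∅ : Finset C), ω β := botSum_le (by omega) (card_empty)
    simpa using h0
  | succ j ih =>
    intro hjk
    have hj : j ≤ k := by omega
    obtain ⟨V, hVc, hVe⟩ := exists_botSum ω (show j ≤ Fintype.card C by omega)
    have hcomp : (univ \ V).card = k - j := by
      rw [card_sdiff_of_subset (subset_univ V), card_univ, hk, hVc]
    have hne : (univ \ V).Nonempty := by
      rw [← card_pos, hcomp]; omega
    have hsumc : ∑ b ∈ univ \ V, ω b = 1 - ∑ b ∈ V, ω b := by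
      have := Finset.sum_sdiff (f := ω) (subset_univ V)
      rw [hsum] at this
      linarith
    set x := ∑ b ∈ V, ω b with hxd
    set q : ℝ := (k:ℝ) - j with hq
    have hjr : (j:ℝ) + 1 ≤ (k:ℝ) := by exact_mod_cast hjk
    have hq1 : (1:ℝ) ≤ q := by rw [hq]; linarith
    have hq0 : (0:ℝ) < q := by linarith
    obtain ⟨β, hβmem, hβ⟩ : ∃ β ∈ univ \ V, ω β ≤ (1 - x) / q := by
      by_contra hcon
      push_neg at hcon
      have hlt := Finset.sum_lt_sum_of_nonempty hne
        (f := fun _ => (1 - x) / q) (fun i hi => hcon i hi)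
      rw [Finset.sum_const, hcomp, hsumc, nsmul_eq_mul] at hlt
      have hcast : ((k - j : ℕ):ℝ) = q := by rw [hq, Nat.cast_sub hj]
      rw [hcast, mul_div_cancel₀ _ (ne_of_gt hq0)] at hlt
      exact lt_irrefl _ hlt
    have hβV : β ∉ V := (mem_sdiff.1 hβmem).2
    have hins : botSum (j+1) ω ≤ ∑ b ∈ insert β V, ω b :=
      botSum_le (by omega) (by rw [card_insert_of_notMem hβV, hVc])
    rw [Finset.sum_insert hβV] at hins
    rw [← hxd] at hins
    have hx : x ≤ (j:ℝ)/k := hVe ▸ ih hj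
    have hkx : x * (k:ℝ) ≤ j := (le_div_iff₀ hk0).1 hx
    have h4 : (1-x)/q + x ≤ ((j:ℝ)+1)/k := by
      rw [div_add' _ _ _ (ne_of_gt hq0), div_le_div_iff₀ hq0 hk0]
      nlinarith [mul_nonneg (by linarith : (0:ℝ) ≤ q - 1)
        (by linarith : (0:ℝ) ≤ (j:ℝ) - x * k)]
    have : botSum (j+1) ω ≤ ((j:ℝ)+1)/k := by linarith
    push_cast
    exact this
lemma weighted_geom (A : ℝ) (hA : 1 ≤ A) (m : ℕ) :
    A^2 * ∑ i ∈ range m, ((m - i : ℕ):ℝ) * (1+A)^i + A*(m+1) + 1 = (1+A)^(m+1) := by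
  have hA0 : A ≠ 0 := by intro h; rw [h] at hA; norm_num at hA
  induction m with
  | zero => simp; ring
  | succ m ih =>
    have hstep : ∑ i ∈ range (m+1), ((m + 1 - i : ℕ):ℝ) * (1+A)^i
        = ∑ i ∈ range m, ((m - i : ℕ):ℝ) * (1+A)^i + ∑ i ∈ range (m+1), (1+A)^i := by
      have h1 : ∀ i ∈ range (m+1), ((m + 1 - i : ℕ):ℝ) * (1+A)^i
          = ((m - i : ℕ):ℝ) * (1+A)^i + (1+A)^i := by
        intro i hi
        have hi' := mem_range.1 hi
        have : (m + 1 - i : ℕ) = (m - i) + 1 := by omega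
        rw [this]; push_cast; ring
      rw [Finset.sum_congr rfl h1, Finset.sum_add_distrib]
      congr 1
      rw [Finset.sum_range_succ]
      simp
    have hgeo : A * ∑ i ∈ range (m+1), (1+A)^i = (1+A)^(m+1) - 1 := by
      rw [Finset.mul_sum]; exact geom_aux A (m+1)
    rw [hstep]
    push_cast
    push_cast at ih
    linear_combination ih + A * hgeo
/-- If (ωₙ) is a sequence of distributions on a set of size k, each step being
either constant or more equitable, and each step's ℓ¹-size is at most A times the gain of some
color in D⁺, then the total ℓ¹-variation is at most ((1+A)^(k+1)/A)·disc(ω₀). -/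
theorem stmt_2 {C : Type*} [Fintype C] [Nonempty C] {k : ℕ} (hk : Fintype.card C = k)
    (hk1 : 1 ≤ k)
    (ω : ℕ → C → ℝ)
    (hdist : ∀ n, (∀ α, 0 ≤ ω n α ∧ ω n α ≤ 1) ∧ ∑ α, ω n α = 1)
    (hstep : ∀ n, ω (n + 1) = ω n ∨
      ∃ α, ω n α < ω (n + 1) α ∧ ∀ β, ω (n + 1) β < ω n β → ω (n + 1) α ≤ ω (n + 1) β)
    (A : ℝ) (hA : 1 ≤ A)
    (hbound : ∀ n α, ω n α < ω (n + 1) α →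
      ∑ β, |ω (n + 1) β - ω n β| ≤ A * (ω (n + 1) α - ω n α)) :
    Summable (fun n => ∑ β, |ω (n + 1) β - ω n β|) ∧
    ∑' n, (∑ β, |ω (n + 1) β - ω n β|) ≤
      ((1 + A) ^ (k + 1) / A) *
        (Finset.univ.sup' Finset.univ_nonempty fun α => |ω 0 α - 1 / (k : ℝ)|) := by
  classical
  set disc := (Finset.univ.sup' Finset.univ_nonempty fun α => |ω 0 α - 1 / (k : ℝ)|) with hdiscdef
  have hdiscβ : ∀ β, |ω 0 β - 1/(k:ℝ)| ≤ disc := by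
    intro β
    rw [hdiscdef]
    exact Finset.le_sup' (fun α => |ω 0 α - 1 / (k:ℝ)|) (mem_univ β)
  have hdisc0 : 0 ≤ disc :=
    le_trans (abs_nonneg _) (hdiscβ (Classical.arbitrary C))
  have hA0 : (0:ℝ) < A := by linarith
  set Ψ : ℕ → ℝ := fun n => ∑ i ∈ range (k-1), A*(1+A)^i * botSum (k-1-i) (ω n) with hΨ
  have hstep' : ∀ n, (∑ β, |ω (n+1) β - ω n β|) ≤ Ψ (n+1) - Ψ n := by
    intro n
    rcases hstep n with h | ⟨α, hα, heqt⟩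
    · have hΨeq : Ψ (n+1) = Ψ n := by simp only [hΨ, h]
      rw [hΨeq, sub_self, h]
      simp
    · exact step_bound hk (ω n) (ω (n+1)) (hdist n).2 (hdist (n+1)).2 hα heqt hA
        (hbound n α hα)
  have hk0 : (0:ℝ) < k := by exact_mod_cast hk1
  have hΨbound : ∀ N, Ψ N - Ψ 0 ≤ ((1+A)^(k+1)/A) * disc := by
    intro N
    have h1 : ∀ i ∈ range (k-1),
        A*(1+A)^i * botSum (k-1-i) (ω N) - A*(1+A)^i * botSum (k-1-i) (ω 0)
          ≤ A*(1+A)^i * (((k-1-i:ℕ):ℝ) * disc) := by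
      intro i hi
      have hik : k-1-i ≤ k := by omega
      have hup : botSum (k-1-i) (ω N) ≤ ((k-1-i:ℕ):ℝ)/k :=
        botSum_le_div hk hk1 (ω N) (hdist N).2 _ hik
      have hlo : ((k-1-i:ℕ):ℝ) * (1/(k:ℝ) - disc) ≤ botSum (k-1-i) (ω 0) := by
        apply botSum_ge (ω 0) (fun β => ?_) (by omega)
        have := abs_le.1 (hdiscβ β)
        linarith [this.1]
      have hd : (0:ℝ) ≤ A*(1+A)^i := by positivity
      have hmid : botSum (k-1-i) (ω N) - botSum (k-1-i) (ω 0) ≤ ((k-1-i:ℕ):ℝ) * disc := by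
        have he : ((k-1-i:ℕ):ℝ)/k = ((k-1-i:ℕ):ℝ) * (1/(k:ℝ)) := by ring
        rw [he] at hup
        nlinarith [hup, hlo]
      calc A*(1+A)^i * botSum (k-1-i) (ω N) - A*(1+A)^i * botSum (k-1-i) (ω 0)
          = A*(1+A)^i * (botSum (k-1-i) (ω N) - botSum (k-1-i) (ω 0)) := by ring
        _ ≤ A*(1+A)^i * (((k-1-i:ℕ):ℝ) * disc) := mul_le_mul_of_nonneg_left hmid hd
    have h2 : Ψ N - Ψ 0 ≤ ∑ i ∈ range (k-1), A*(1+A)^i * (((k-1-i:ℕ):ℝ) * disc) := by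
      rw [hΨ]
      rw [← Finset.sum_sub_distrib]
      exact Finset.sum_le_sum h1
    have h3 : ∑ i ∈ range (k-1), A*(1+A)^i * (((k-1-i:ℕ):ℝ) * disc)
        = A * disc * ∑ i ∈ range (k-1), ((k-1-i:ℕ):ℝ) * (1+A)^i := by
      rw [Finset.mul_sum]
      exact Finset.sum_congr rfl (fun i _ => by ring)
    set G := ∑ i ∈ range (k-1), ((k-1-i:ℕ):ℝ) * (1+A)^i with hG
    have hid := weighted_geom A hA (k-1)
    have hkm : k - 1 + 1 = k := by omega
    rw [hkm] at hid
    have hGk : A^2 * G ≤ (1+A)^k := by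
      have hnn : (0:ℝ) ≤ A * ((k-1:ℕ):ℝ) + A := by positivity
      push_cast [hG]
      nlinarith [hid]
    have hpow : (1+A)^k ≤ (1+A)^(k+1) := pow_le_pow_right₀ (by linarith) (Nat.le_succ k)
    have hAG : A * G ≤ (1+A)^(k+1)/A := by
      rw [le_div_iff₀ hA0]
      nlinarith [hGk, hpow]
    calc Ψ N - Ψ 0 ≤ A * disc * G := by rw [← h3]; exact h2
      _ = disc * (A * G) := by ring
      _ ≤ disc * ((1+A)^(k+1)/A) := mul_le_mul_of_nonneg_left hAG hdisc0
      _ = ((1+A)^(k+1)/A) * disc := mul_comm _ _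
  have hpartial : ∀ N, ∑ n ∈ range N, (∑ β, |ω (n+1) β - ω n β|)
      ≤ ((1+A)^(k+1)/A) * disc := by
    intro N
    calc ∑ n ∈ range N, (∑ β, |ω (n+1) β - ω n β|)
        ≤ ∑ n ∈ range N, (Ψ (n+1) - Ψ n) := Finset.sum_le_sum (fun n _ => hstep' n)
      _ = Ψ N - Ψ 0 := Finset.sum_range_sub Ψ N
      _ ≤ _ := hΨbound N
  have hnonneg : ∀ n, 0 ≤ ∑ β, |ω (n+1) β - ω n β| :=
    fun n => Finset.sum_nonneg (fun β _ => abs_nonneg _)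
  have hsummable := summable_of_sum_range_le hnonneg hpartial
  exact ⟨hsummable, Summable.tsum_le_of_sum_range_le hsummable hpartial⟩
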